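/- Let n ≥ 1, Σ ∈ S_n, Θ ∈ A_n. Then the complex Hermitian matrix S := Σ + (i/2)Θ is positive definite if and only if Σ is positive definite and the matrix Ξ := (1/2)·Σ^{−1/2} Θ Σ^{−1/2} has spectral (operator) norm strictly less than 1, where Σ^{−1/2} denotes the inverse of the unique positive definite symmetric square root of Σ. -/

import Mathlib

open Matrix ComplexOrder

/-- The spectral (operator) norm of a real `n × n` matrix `M`, i.e. the
operator norm of the induced map on Euclidean space, equal to
`sqrt(λ_max(MᵀM))`. -/
noncomputable def specNorm {n : ℕ} (M : Matrix (Fin n) (Fin n) ℝ) : ℝ :=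
  ‖Matrix.toEuclideanCLM (𝕜 := ℝ) M‖

/-- The positive semidefinite square root of a positive semidefinite matrix, as defined in
the older Mathlib (`Matrix.PosSemidef.sqrt`, since removed). -/
noncomputable def Matrix.PosSemidef.sqrt {n 𝕜 : Type*} [Fintype n] [DecidableEq n] [RCLike 𝕜]
    {A : Matrix n n 𝕜} (hA : A.PosSemidef) : Matrix n n 𝕜 :=
  hA.1.eigenvectorUnitary.1 * diagonal ((↑) ∘ (√·) ∘ hA.1.eigenvalues) *
    (star hA.1.eigenvectorUnitary : Matrix n n 𝕜)

private theorem psd_sqrt_mul_self {n : ℕ} {A : Matrix (Fin n) (Fin n) ℝ} (hA : A.PosSemidef) :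
    Matrix.PosSemidef.sqrt hA * Matrix.PosSemidef.sqrt hA = A := by
  have hU : (star hA.1.eigenvectorUnitary : Matrix (Fin n) (Fin n) ℝ) *
      hA.1.eigenvectorUnitary.1 = 1 := Unitary.coe_star_mul_self _
  have hD : diagonal (((↑) ∘ (√·) ∘ hA.1.eigenvalues : Fin n → ℝ)) *
      diagonal (((↑) ∘ (√·) ∘ hA.1.eigenvalues : Fin n → ℝ)) =
      diagonal (RCLike.ofReal ∘ hA.1.eigenvalues : Fin n → ℝ) := by
    rw [diagonal_mul_diagonal]; congr 1; funext i
    simp [Real.mul_self_sqrt (hA.eigenvalues_nonneg i)]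
  conv_rhs => rw [hA.1.spectral_theorem, Unitary.conjStarAlgAut_apply]
  unfold Matrix.PosSemidef.sqrt
  rw [← hD]
  simp only [Matrix.mul_assoc]
  rw [← Matrix.mul_assoc _ hA.1.eigenvectorUnitary.1, hU, Matrix.one_mul]
  rfl

private theorem psd_sqrt_transpose {n : ℕ} {A : Matrix (Fin n) (Fin n) ℝ} (hA : A.PosSemidef) :
    (Matrix.PosSemidef.sqrt hA)ᵀ = Matrix.PosSemidef.sqrt hA := by
  unfold Matrix.PosSemidef.sqrt
  rw [← Matrix.conjTranspose_eq_transpose_of_trivial]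
  simp [Matrix.conjTranspose_mul, Matrix.mul_assoc, Matrix.star_eq_conjTranspose]

private theorem qf_real {n : ℕ} (M : Matrix (Fin n) (Fin n) ℝ) (z : Fin n → ℂ) :
    star z ⬝ᵥ (M.map Complex.ofReal) *ᵥ z =
      Complex.ofReal ((fun i => (z i).re) ⬝ᵥ M *ᵥ (fun i => (z i).re)
        + (fun i => (z i).im) ⬝ᵥ M *ᵥ (fun i => (z i).im))
      + Complex.I * Complex.ofReal ((fun i => (z i).re) ⬝ᵥ M *ᵥ (fun i => (z i).im)
        - (fun i => (z i).im) ⬝ᵥ M *ᵥ (fun i => (z i).re)) := by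
  have hsimp : ∀ i j, (starRingEnd ℂ) (z i) * ((M i j : ℂ) * z j)
      = Complex.ofReal (M i j * ((z i).re * (z j).re) + M i j * ((z i).im * (z j).im))
        + Complex.I * Complex.ofReal (M i j * ((z i).re * (z j).im)
          - M i j * ((z i).im * (z j).re)) := by
    intro i j
    apply Complex.ext <;>
      simp [Complex.mul_re, Complex.mul_im] <;> ring
  simp only [dotProduct, mulVec, Pi.star_apply, Matrix.map_apply, Finset.mul_sum,
    Complex.star_def, hsimp]
  push_cast
  simp only [Finset.mul_sum, ← Finset.sum_add_distrib, ← Finset.sum_sub_distrib]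
  refine Finset.sum_congr rfl fun i _ => Finset.sum_congr rfl fun j _ => ?_
  ring

private theorem qf_herm {n : ℕ} (Sgm Θ : Matrix (Fin n) (Fin n) ℝ)
    (hSgmSymm : Sgm.IsSymm) (hΘ : Θᵀ = -Θ) (z : Fin n → ℂ) :
    star z ⬝ᵥ ((Sgm.map Complex.ofReal + (Complex.I / 2) • Θ.map Complex.ofReal) *ᵥ z) =
      Complex.ofReal ((fun i => (z i).re) ⬝ᵥ Sgm *ᵥ (fun i => (z i).re)
        + (fun i => (z i).im) ⬝ᵥ Sgm *ᵥ (fun i => (z i).im)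
        - (fun i => (z i).re) ⬝ᵥ Θ *ᵥ (fun i => (z i).im)) := by
  set x := fun i => (z i).re with hx
  set y := fun i => (z i).im with hy
  have hsym : ∀ a b : Fin n → ℝ, a ⬝ᵥ Sgm *ᵥ b = b ⬝ᵥ Sgm *ᵥ a := by
    intro a b
    rw [Matrix.dotProduct_mulVec, ← Matrix.mulVec_transpose, hSgmSymm.eq, dotProduct_comm]
  have hanti : ∀ a b : Fin n → ℝ, a ⬝ᵥ Θ *ᵥ b = -(b ⬝ᵥ Θ *ᵥ a) := by
    intro a b
    rw [Matrix.dotProduct_mulVec, ← Matrix.mulVec_transpose, hΘ, Matrix.neg_mulVec,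
      neg_dotProduct, dotProduct_comm]
  have h2 : x ⬝ᵥ Θ *ᵥ x = 0 := by have := hanti x x; linarith
  have h3 : y ⬝ᵥ Θ *ᵥ y = 0 := by have := hanti y y; linarith
  rw [Matrix.add_mulVec, dotProduct_add, Matrix.smul_mulVec, dotProduct_smul,
    qf_real, qf_real, smul_eq_mul]
  rw [← hx, ← hy, hsym y x, h2, h3, hanti y x]
  apply Complex.ext <;> simp [Complex.mul_re, Complex.mul_im, Complex.div_re,
    Complex.div_im] <;> ring

private theorem clm_norm_lt_one {E : Type*} [NormedAddCommGroup E] [NormedSpace ℝ E]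
    [FiniteDimensional ℝ E] [Nontrivial E] (T : E →L[ℝ] E)
    (h : ∀ v : E, ‖v‖ = 1 → ‖T v‖ < 1) : ‖T‖ < 1 := by
  obtain ⟨v, hv, hmax⟩ := (isCompact_sphere (0 : E) 1).exists_isMaxOn
    (NormedSpace.sphere_nonempty.2 zero_le_one)
    ((continuous_norm.comp T.continuous).continuousOn)
  have hv1 : ‖v‖ = 1 := by simpa using hv
  exact lt_of_le_of_lt
    (ContinuousLinearMap.opNorm_le_of_unit_norm (norm_nonneg _)
      (fun x hx => hmax (by simpa using hx))) (h v hv1)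

private theorem specNorm_lt_one_iff {n : ℕ} (hn : 1 ≤ n) (M : Matrix (Fin n) (Fin n) ℝ) :
    specNorm M < 1 ↔ ∀ u v : Fin n → ℝ, (u ≠ 0 ∨ v ≠ 0) →
      2 * (u ⬝ᵥ M *ᵥ v) < u ⬝ᵥ u + v ⬝ᵥ v := by
  set T := Matrix.toEuclideanCLM (𝕜 := ℝ) M with hT
  set e : (Fin n → ℝ) → EuclideanSpace ℝ (Fin n) := ⇑(WithLp.equiv 2 (Fin n → ℝ)).symm with he
  have hTe : ∀ v, T (e v) = e (M *ᵥ v) := fun v =>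
    Matrix.toEuclideanCLM_toLp (𝕜 := ℝ) M v
  have hinner : ∀ u v : Fin n → ℝ, (inner ℝ (e u) (e v) : ℝ) = u ⬝ᵥ v := by
    intro u v
    simp [he, PiLp.inner_apply, RCLike.inner_apply, dotProduct, mul_comm]
  have hnorm : ∀ u : Fin n → ℝ, ‖e u‖ ^ 2 = u ⬝ᵥ u := fun u => by
    rw [← real_inner_self_eq_norm_sq, hinner]
  have he0 : ∀ u : Fin n → ℝ, e u = 0 ↔ u = 0 := by
    intro u
    constructor
    · intro h
      have := (WithLp.equiv 2 (Fin n → ℝ)).symm.injective (a₂ := 0) (by simpa [he] using h)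
      simpa using this
    · intro h; simp [he, h]
  have hnormspec : specNorm M = ‖T‖ := rfl
  constructor
  · intro hM u v huv
    have h1 : u ⬝ᵥ M *ᵥ v = inner ℝ (e u) (T (e v)) := by rw [hTe, hinner]
    have h2 : (inner ℝ (e u) (T (e v)) : ℝ) ≤ ‖e u‖ * ‖T (e v)‖ := real_inner_le_norm _ _
    have h3 : ‖T (e v)‖ ≤ ‖T‖ * ‖e v‖ := T.le_opNorm _
    have h4 : (0 : ℝ) ≤ ‖T‖ := norm_nonneg _
    have h5 : (0 : ℝ) ≤ ‖e u‖ := norm_nonneg _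
    have h6 : (0 : ℝ) ≤ ‖e v‖ := norm_nonneg _
    have hM' : ‖T‖ < 1 := by rwa [hnormspec] at hM
    have h7 : 0 < ‖e u‖ ^ 2 + ‖e v‖ ^ 2 := by
      rcases huv with hu | hv
      · have : 0 < ‖e u‖ := norm_pos_iff.2 (fun h0 => hu ((he0 u).1 h0))
        nlinarith [sq_nonneg ‖e v‖]
      · have : 0 < ‖e v‖ := norm_pos_iff.2 (fun h0 => hv ((he0 v).1 h0))
        nlinarith [sq_nonneg ‖e u‖]
    rw [← hnorm u, ← hnorm v, h1]
    nlinarith [sq_nonneg (‖e u‖ - ‖e v‖), mul_le_mul_of_nonneg_left h3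
      (by positivity : (0:ℝ) ≤ 2 * ‖e u‖)]
  · intro h
    haveI : Nonempty (Fin n) := ⟨⟨0, hn⟩⟩
    haveI : Nontrivial (EuclideanSpace ℝ (Fin n)) := by
      refine ⟨e 0, e 1, fun hc => ?_⟩
      have := (WithLp.equiv 2 (Fin n → ℝ)).symm.injective hc
      have := congrFun this ⟨0, hn⟩
      norm_num at this
    rw [hnormspec]
    refine clm_norm_lt_one T fun w hw => ?_
    set v : Fin n → ℝ := WithLp.equiv 2 (Fin n → ℝ) w with hv
    have hev : e v = w := by simp [he, hv]
    have hv0 : v ≠ 0 := by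
      intro h0
      have hw0 : w = 0 := by rw [← hev, h0, (he0 0).2 rfl]
      rw [hw0] at hw
      norm_num at hw
    have key := h (M *ᵥ v) v (Or.inr hv0)
    have h1 : ‖T w‖ ^ 2 = (M *ᵥ v) ⬝ᵥ (M *ᵥ v) := by rw [← hev, hTe, hnorm]
    have h2 : v ⬝ᵥ v = 1 := by rw [← hnorm, hev, hw]; norm_num
    nlinarith [norm_nonneg (T w)]

theorem quantum_covariance_posdef_iff_contraction
    {n : ℕ} (hn : 1 ≤ n)
    (Sgm Θ : Matrix (Fin n) (Fin n) ℝ)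
    (hSgmSymm : Sgm.IsSymm) (hΘ : Θᵀ = -Θ) :
    (Sgm.map (Complex.ofReal) +
      (Complex.I / 2) • Θ.map (Complex.ofReal)).PosDef ↔
    ∃ hSgmPd : Sgm.PosDef,
      specNorm ((1 / 2 : ℝ) •
        ((Matrix.PosSemidef.sqrt hSgmPd.posSemidef)⁻¹ * Θ * (Matrix.PosSemidef.sqrt hSgmPd.posSemidef)⁻¹)) < 1 := by
  constructor
  · intro hPD
    have hSgmPd : Sgm.PosDef := by
      refine Matrix.PosDef.of_dotProduct_mulVec_pos ?_ ?_
      · rw [Matrix.IsHermitian, Matrix.conjTranspose_eq_transpose_of_trivial]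
        exact hSgmSymm.eq
      · intro x hx
        have hz : (fun i => (x i : ℂ)) ≠ 0 := by
          intro h0
          apply hx
          funext i
          have h1 : (x i : ℂ) = 0 := by simpa using congrFun h0 i
          exact_mod_cast h1
        have := hPD.dotProduct_mulVec_pos hz
        rw [qf_herm Sgm Θ hSgmSymm hΘ] at this
        simp only [Complex.ofReal_re, Complex.ofReal_im] at this
        rw [Complex.zero_lt_real] at this
        simpa [show (fun _ : Fin n => (0 : ℝ)) = 0 from rfl] using this
    refine ⟨hSgmPd, ?_⟩
    set Q := Matrix.PosSemidef.sqrt hSgmPd.posSemidef with hQdef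
    have hqq : Q * Q = Sgm := psd_sqrt_mul_self hSgmPd.posSemidef
    have hQsymm : Qᵀ = Q := psd_sqrt_transpose hSgmPd.posSemidef
    have hdet : IsUnit Q.det := by
      have hdd : Q.det * Q.det = Sgm.det := by rw [← Matrix.det_mul, hqq]
      have hd : Sgm.det ≠ 0 := ne_of_gt hSgmPd.det_pos
      exact isUnit_iff_ne_zero.2 (fun h0 => hd (by rw [← hdd, h0, zero_mul]))
    set R := Q⁻¹ with hRdef
    have hRQ : R * Q = 1 := Matrix.nonsing_inv_mul Q hdet
    have hQR : Q * R = 1 := Matrix.mul_nonsing_inv Q hdet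
    have hRsymm : Rᵀ = R := by rw [hRdef, Matrix.transpose_nonsing_inv, hQsymm]
    have hRSR : R * Sgm * R = 1 := by
      rw [← hqq, ← Matrix.mul_assoc, hRQ, Matrix.one_mul, hQR]
    have hRa : ∀ a : Fin n → ℝ, R *ᵥ a = a ᵥ* R := by
      intro a
      conv_lhs => rw [← hRsymm]
      rw [Matrix.mulVec_transpose]
    have hsub : ∀ (A : Matrix (Fin n) (Fin n) ℝ) (a b : Fin n → ℝ),
        (R *ᵥ a) ⬝ᵥ (A *ᵥ (R *ᵥ b)) = a ⬝ᵥ ((R * A * R) *ᵥ b) := by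
      intro A a b
      rw [hRa, ← Matrix.dotProduct_mulVec]
      simp [Matrix.mulVec_mulVec, Matrix.mul_assoc]
    have hsubS : ∀ a b : Fin n → ℝ, (R *ᵥ a) ⬝ᵥ (Sgm *ᵥ (R *ᵥ b)) = a ⬝ᵥ b := by
      intro a b; rw [hsub, hRSR, Matrix.one_mulVec]
    have hsubΘ : ∀ a b : Fin n → ℝ, (R *ᵥ a) ⬝ᵥ (Θ *ᵥ (R *ᵥ b))
        = 2 * (a ⬝ᵥ ((1 / 2 : ℝ) • (R * Θ * R)) *ᵥ b) := by
      intro a b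
      rw [hsub, Matrix.smul_mulVec, dotProduct_smul, smul_eq_mul]
      ring
    have hR0 : ∀ a : Fin n → ℝ, R *ᵥ a = 0 → a = 0 := by
      intro a ha
      have : (Q * R) *ᵥ a = Q *ᵥ (R *ᵥ a) := (Matrix.mulVec_mulVec a Q R).symm
      rw [hQR, Matrix.one_mulVec, ha, Matrix.mulVec_zero] at this
      exact this
    rw [specNorm_lt_one_iff hn]
    intro u v huv
    set z : Fin n → ℂ := fun i => (((R *ᵥ u) i : ℝ) : ℂ) + (((R *ᵥ v) i : ℝ) : ℂ) * Complex.I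
      with hzdef
    have hzre : (fun i => (z i).re) = R *ᵥ u := by funext i; simp [hzdef]
    have hzim : (fun i => (z i).im) = R *ᵥ v := by funext i; simp [hzdef]
    have hz : z ≠ 0 := by
      intro h0
      have hu : R *ᵥ u = 0 := by
        rw [← hzre, h0]; funext i; simp
      have hv : R *ᵥ v = 0 := by
        rw [← hzim, h0]; funext i; simp
      rcases huv with h | h
      · exact h (hR0 u hu)
      · exact h (hR0 v hv)
    have := hPD.dotProduct_mulVec_pos hz
    rw [qf_herm Sgm Θ hSgmSymm hΘ, hzre, hzim] at this
    rw [Complex.zero_lt_real] at this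
    rw [hsubS, hsubS, hsubΘ] at this
    linarith
  · rintro ⟨hSgmPd, hΞ⟩
    set Q := Matrix.PosSemidef.sqrt hSgmPd.posSemidef with hQdef
    have hqq : Q * Q = Sgm := psd_sqrt_mul_self hSgmPd.posSemidef
    have hQsymm : Qᵀ = Q := psd_sqrt_transpose hSgmPd.posSemidef
    have hdet : IsUnit Q.det := by
      have hdd : Q.det * Q.det = Sgm.det := by rw [← Matrix.det_mul, hqq]
      have hd : Sgm.det ≠ 0 := ne_of_gt hSgmPd.det_pos
      exact isUnit_iff_ne_zero.2 (fun h0 => hd (by rw [← hdd, h0, zero_mul]))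
    set R := Q⁻¹ with hRdef
    have hRQ : R * Q = 1 := Matrix.nonsing_inv_mul Q hdet
    have hQR : Q * R = 1 := Matrix.mul_nonsing_inv Q hdet
    have hRsymm : Rᵀ = R := by rw [hRdef, Matrix.transpose_nonsing_inv, hQsymm]
    have hRSR : R * Sgm * R = 1 := by
      rw [← hqq, ← Matrix.mul_assoc, hRQ, Matrix.one_mul, hQR]
    have hRa : ∀ a : Fin n → ℝ, R *ᵥ a = a ᵥ* R := by
      intro a
      conv_lhs => rw [← hRsymm]
      rw [Matrix.mulVec_transpose]
    have hsub : ∀ (A : Matrix (Fin n) (Fin n) ℝ) (a b : Fin n → ℝ),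
        (R *ᵥ a) ⬝ᵥ (A *ᵥ (R *ᵥ b)) = a ⬝ᵥ ((R * A * R) *ᵥ b) := by
      intro A a b
      rw [hRa, ← Matrix.dotProduct_mulVec]
      simp [Matrix.mulVec_mulVec, Matrix.mul_assoc]
    have hsubS : ∀ a b : Fin n → ℝ, (R *ᵥ a) ⬝ᵥ (Sgm *ᵥ (R *ᵥ b)) = a ⬝ᵥ b := by
      intro a b; rw [hsub, hRSR, Matrix.one_mulVec]
    have hsubΘ : ∀ a b : Fin n → ℝ, (R *ᵥ a) ⬝ᵥ (Θ *ᵥ (R *ᵥ b))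
        = 2 * (a ⬝ᵥ ((1 / 2 : ℝ) • (R * Θ * R)) *ᵥ b) := by
      intro a b
      rw [hsub, Matrix.smul_mulVec, dotProduct_smul, smul_eq_mul]
      ring
    have hRQa : ∀ a : Fin n → ℝ, R *ᵥ (Q *ᵥ a) = a := by
      intro a
      rw [Matrix.mulVec_mulVec, hRQ, Matrix.one_mulVec]
    refine Matrix.PosDef.of_dotProduct_mulVec_pos ?_ ?_
    · -- Hermitian
      rw [Matrix.IsHermitian]
      ext i j
      have hs : Sgm j i = Sgm i j := by
        have := congrFun (congrFun hSgmSymm.eq i) j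
        simpa [Matrix.transpose_apply] using this
      have ht : Θ j i = -Θ i j := by
        have := congrFun (congrFun hΘ i) j
        simpa [Matrix.transpose_apply] using this
      simp only [Matrix.conjTranspose_apply, Matrix.add_apply, Matrix.smul_apply,
        Matrix.map_apply, smul_eq_mul, map_add, _root_.map_mul, Complex.conj_ofReal, hs, ht]
      apply Complex.ext <;> simp [Complex.mul_re, Complex.mul_im, Complex.div_re,
        Complex.div_im] <;> ring
    · intro z hz
      rw [qf_herm Sgm Θ hSgmSymm hΘ]
      set x := fun i => (z i).re with hx
      set y := fun i => (z i).im with hy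
      set u := Q *ᵥ x with hu
      set v := Q *ᵥ y with hv
      have hxu : x = R *ᵥ u := by rw [hu, hRQa]
      have hyv : y = R *ᵥ v := by rw [hv, hRQa]
      have huv : u ≠ 0 ∨ v ≠ 0 := by
        by_contra hc
        push_neg at hc
        apply hz
        have hx0 : x = 0 := by rw [hxu, hc.1, Matrix.mulVec_zero]
        have hy0 : y = 0 := by rw [hyv, hc.2, Matrix.mulVec_zero]
        funext i
        apply Complex.ext
        · simpa using congrFun hx0 i
        · simpa using congrFun hy0 i
      have key := (specNorm_lt_one_iff hn _).1 hΞ u v huv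
      rw [Complex.zero_lt_real]
      rw [hxu, hyv, hsubS, hsubS, hsubΘ]
      linarith
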